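/- Linking is sound: if every exactly satisfying assignment of φ has y = ¬x, and φ' = φ[y := ¬x] with updated weights c'(x) = c(x)·c(¬y), c'(¬x) = c(¬x)·c(y) (entries for y, ¬y dropped), then the weighted model count of φ with weights c equals the weighted model count of φ' with weights c'. -/
import Mathlib


/-- Soundness of linking: if every exactly satisfying assignment of φ has
y = ¬x, then substituting y := ¬x with weights c'(x) = c(x)·c(¬y),
c'(¬x) = c(¬x)·c(y) preserves the weighted model count. -/
theorem linking_sound
    {α : Type*} [Fintype α] [DecidableEq α]
    (φ : Bool → Bool → (α → Bool) → Prop) [∀ a b, DecidablePred (φ a b)]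
    (cx cnx cy cny : ℕ) (c : α → Bool → ℕ)
    (hlink : ∀ a b : Bool, ∀ h : α → Bool, φ a b h → b = !a) :
    (Finset.univ.filter (fun p : Bool × Bool × (α → Bool) => φ p.1 p.2.1 p.2.2)).sum
      (fun p => (if p.1 then cx else cnx) * (if p.2.1 then cy else cny)
        * ∏ v, c v (p.2.2 v))
    = (Finset.univ.filter (fun q : Bool × (α → Bool) => φ q.1 (!q.1) q.2)).sum
      (fun q => (if q.1 then cx * cny else cnx * cy) * ∏ v, c v (q.2 v)) := by
  apply Finset.sum_nbij' (fun p : Bool × Bool × (α → Bool) => (p.1, p.2.2))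
    (fun q : Bool × (α → Bool) => (q.1, !q.1, q.2))
  · intro p hp
    simp only [Finset.mem_filter, Finset.mem_univ, true_and] at hp ⊢
    rwa [← hlink _ _ _ hp]
  · intro q hq
    simp only [Finset.mem_filter, Finset.mem_univ, true_and] at hq ⊢
    exact hq
  · intro p hp
    simp only [Finset.mem_filter, Finset.mem_univ, true_and] at hp
    have := hlink _ _ _ hp
    cases p with
    | mk a r => cases r with
      | mk b h => simp at this ⊢; cases a <;> simp_all
  · intro q hq; rfl
  · intro p hp
    simp only [Finset.mem_filter, Finset.mem_univ, true_and] at hp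
    obtain ⟨a, b, h⟩ := p
    simp only at hp ⊢
    have hb := hlink _ _ _ hp
    subst hb
    cases a <;> simp [mul_assoc, mul_comm, mul_left_comm]
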